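/- Let G be a Vilenkin group and n ∈ ℕ with |n| ≠ ⟨n⟩. If x ∈ I_{⟨n⟩+1}(e_{⟨n⟩}), i.e. x_j = 0 for j < ⟨n⟩, x_{⟨n⟩} = 1, then |D_n(x)| = |D_{n − M_{|n|}}(x)| and |D_n(x)| ≥ M_{⟨n⟩}. -/

import Mathlib

open MeasureTheory Complex Real

def Mseq (m : ℕ → ℕ) : ℕ → ℕ
  | 0 => 1
  | k + 1 => m k * Mseq m k

def digit (m : ℕ → ℕ) (n j : ℕ) : ℕ := n / Mseq m j % m j

noncomputable def hi (m : ℕ → ℕ) (n : ℕ) : ℕ := sSup {j | digit m n j ≠ 0}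

noncomputable def lo (m : ℕ → ℕ) (n : ℕ) : ℕ := sInf {j | digit m n j ≠ 0}

noncomputable def rho (m : ℕ → ℕ) (n : ℕ) : ℕ := hi m n - lo m n

abbrev Gm (m : ℕ → ℕ) := ∀ k, ZMod (m k)

instance (n : ℕ) : MeasurableSpace (ZMod n) := ⊤

noncomputable def rad (m : ℕ → ℕ) (j : ℕ) (x : Gm m) : ℂ :=
  Complex.exp (2 * Real.pi * Complex.I * ((x j).val : ℂ) / (m j : ℂ))

noncomputable def vil (m : ℕ → ℕ) (n : ℕ) (x : Gm m) : ℂ :=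
  ∏ᶠ j, rad m j x ^ digit m n j

noncomputable def Dker (m : ℕ → ℕ) (n : ℕ) (x : Gm m) : ℂ :=
  ∑ k ∈ Finset.range n, vil m k x

/-- The defining property of the normalized Haar measure on the Vilenkin group:
every cylinder set `I_n(x)` has measure `1 / M_n`. -/
def IsVilenkinHaar (m : ℕ → ℕ) (μ : Measure (Gm m)) : Prop :=
  ∀ (n : ℕ) (x : Gm m), μ {y : Gm m | ∀ j < n, y j = x j} = (Mseq m n : ENNReal)⁻¹

noncomputable def vilCoeff (m : ℕ → ℕ) (μ : Measure (Gm m)) (f : Gm m → ℂ) (j : ℕ) : ℂ :=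
  ∫ t, f t * (starRingEnd ℂ) (vil m j t) ∂μ

noncomputable def Svil (m : ℕ → ℕ) (μ : Measure (Gm m)) (f : Gm m → ℂ) (n : ℕ) (x : Gm m) : ℂ :=
  ∑ j ∈ Finset.range n, vilCoeff m μ f j * vil m j x

section lems
variable (m : ℕ → ℕ) (hm : ∀ k, 2 ≤ m k)
include hm

lemma Mpos : ∀ k, 0 < Mseq m k := by
  intro k; induction k with
  | zero => simp [Mseq]
  | succ k ih => exact Nat.mul_pos (lt_of_lt_of_le two_pos (hm k)) ih

lemma Mdvd {k l : ℕ} (h : k ≤ l) : Mseq m k ∣ Mseq m l := by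
  induction l, h using Nat.le_induction with
  | base => exact dvd_rfl
  | succ l hl ih => exact ih.trans (dvd_mul_left _ _)

lemma Mle {k l : ℕ} (h : k ≤ l) : Mseq m k ≤ Mseq m l :=
  Nat.le_of_dvd (Mpos m hm l) (Mdvd m hm h)

lemma lt_M : ∀ k, k < Mseq m k := by
  intro k; induction k with
  | zero => simp [Mseq]
  | succ k ih =>
    have h2 : 2 * Mseq m k ≤ m k * Mseq m k := Nat.mul_le_mul_right _ (hm k)
    show k + 1 < m k * Mseq m k
    omega

lemma digit_lt (n j : ℕ) : digit m n j < m j :=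
  Nat.mod_lt _ (lt_of_lt_of_le two_pos (hm j))

lemma digit_eq_zero {n j : ℕ} (h : n < Mseq m j) : digit m n j = 0 := by
  simp [digit, Nat.div_eq_of_lt h]

lemma digit_zero (j : ℕ) : digit m 0 j = 0 := by simp [digit]

lemma digit_add {r i k : ℕ} (hik : i < Mseq m k) (j : ℕ) :
    digit m (r * Mseq m k + i) j =
      if j < k then digit m i j else digit m (r * Mseq m k) j := by
  split_ifs with h
  · unfold digit
    have hd : Mseq m j * m j ∣ r * Mseq m k := by
      have h1 : Mseq m (j+1) ∣ Mseq m k := Mdvd m hm h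
      have h2 : Mseq m (j+1) = Mseq m j * m j := by
        show m j * Mseq m j = _ ; ring
      exact Dvd.dvd.mul_left (h2 ▸ h1) r
    obtain ⟨c, hc⟩ := hd
    have hMj : Mseq m j ∣ r * Mseq m k := ⟨m j * c, by rw [hc]; ring⟩
    rw [Nat.add_div_of_dvd_right hMj]
    have h3 : r * Mseq m k / Mseq m j = m j * c := by
      rw [hc, mul_assoc, Nat.mul_div_cancel_left _ (Mpos m hm j)]
    rw [h3, Nat.mul_add_mod]
  · push_neg at h
    unfold digit
    obtain ⟨t, ht⟩ := Mdvd m hm h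
    rw [ht, ← Nat.div_div_eq_div_mul, ← Nat.div_div_eq_div_mul]
    have h1 : (r * Mseq m k + i) / Mseq m k = r := by
      rw [mul_comm, Nat.mul_add_div (Mpos m hm k), Nat.div_eq_of_lt hik, add_zero]
    rw [h1, Nat.mul_div_cancel _ (Mpos m hm k)]

lemma digit_mul_M_eq_zero {r k j : ℕ} (hj : j < k) : digit m (r * Mseq m k) j = 0 := by
  have := digit_add m hm (r := r) (i := 0) (k := k) (Mpos m hm k) j
  rw [add_zero, if_pos hj, digit_zero m hm] at this
  exact this

lemma vil_eq_prod {n N : ℕ} (hN : n < Mseq m N) (x : Gm m) :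
    vil m n x = ∏ j ∈ Finset.range N, rad m j x ^ digit m n j := by
  apply finprod_eq_prod_of_mulSupport_subset
  intro j hj
  simp only [Finset.coe_range, Set.mem_Iio]
  by_contra h
  push_neg at h
  have : digit m n j = 0 := digit_eq_zero m hm (lt_of_lt_of_le hN (Mle m hm h))
  simp [Function.mem_mulSupport, this] at hj

lemma rad_eq (j : ℕ) (x : Gm m) :
    rad m j x = Complex.exp (((2 * π * ((x j).val : ℝ) / (m j : ℝ) : ℝ) : ℂ) * Complex.I) := by
  unfold rad; congr 1; push_cast; ring

lemma abs_rad (j : ℕ) (x : Gm m) : ‖rad m j x‖ = 1 := by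
  rw [rad_eq m hm]; exact Complex.norm_exp_ofReal_mul_I _

lemma abs_vil (n : ℕ) (x : Gm m) : ‖vil m n x‖ = 1 := by
  rw [vil_eq_prod m hm (lt_M m hm n) x, norm_prod]
  apply Finset.prod_eq_one
  intro j _
  rw [norm_pow, abs_rad m hm, one_pow]

lemma vil_zero (x : Gm m) : vil m 0 x = 1 := by
  unfold vil; simp [digit_zero m hm]

lemma vil_split {i k : ℕ} (r : ℕ) (hik : i < Mseq m k) (x : Gm m) :
    vil m (r * Mseq m k + i) x = vil m (r * Mseq m k) x * vil m i x := by
  set N := r * Mseq m k + Mseq m k with hN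
  have hNlt : N < Mseq m N := lt_M m hm N
  have hMk : 0 < Mseq m k := Mpos m hm k
  have h1 : r * Mseq m k + i < Mseq m N := by omega
  have h2 : r * Mseq m k < Mseq m N := by omega
  have h3 : i < Mseq m N := by omega
  rw [vil_eq_prod m hm h1 x, vil_eq_prod m hm h2 x, vil_eq_prod m hm h3 x,
    ← Finset.prod_mul_distrib]
  apply Finset.prod_congr rfl
  intro j _
  rw [digit_add m hm hik j]
  split_ifs with h
  · rw [digit_mul_M_eq_zero m hm h, pow_zero, one_mul]
  · push_neg at h
    rw [digit_eq_zero m hm (lt_of_lt_of_le hik (Mle m hm h)), pow_zero, mul_one]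

lemma vil_rM {r k : ℕ} (hr : r < m k) (x : Gm m) :
    vil m (r * Mseq m k) x = rad m k x ^ r := by
  have hlt : r * Mseq m k < Mseq m (k+1) := by
    show _ < m k * Mseq m k
    exact Nat.mul_lt_mul_of_lt_of_le hr le_rfl (Mpos m hm k)
  rw [vil_eq_prod m hm hlt x, Finset.prod_range_succ]
  rw [Finset.prod_eq_one (fun j hj => by
    rw [digit_mul_M_eq_zero m hm (Finset.mem_range.mp hj), pow_zero]), one_mul]
  congr 1
  unfold digit
  rw [Nat.mul_div_cancel _ (Mpos m hm k), Nat.mod_eq_of_lt hr]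

lemma Dker_split {q k : ℕ} (r : ℕ) (hq : q ≤ Mseq m k) (x : Gm m) :
    Dker m (r * Mseq m k + q) x
      = Dker m (r * Mseq m k) x + vil m (r * Mseq m k) x * Dker m q x := by
  unfold Dker
  rw [Finset.sum_range_add, Finset.mul_sum]
  congr 1
  apply Finset.sum_congr rfl
  intro i hi
  exact vil_split m hm r (lt_of_lt_of_le (Finset.mem_range.mp hi) hq) x

lemma Dker_block {a k : ℕ} (ha : a ≤ m k) (x : Gm m) :
    Dker m (a * Mseq m k) x
      = (∑ r ∈ Finset.range a, rad m k x ^ r) * Dker m (Mseq m k) x := by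
  induction a with
  | zero => simp [Dker]
  | succ a ih =>
    have ha' : a ≤ m k := Nat.le_of_succ_le ha
    rw [show (a+1) * Mseq m k = a * Mseq m k + Mseq m k from by ring,
      Dker_split m hm a le_rfl x, ih ha', vil_rM m hm (lt_of_lt_of_le (Nat.lt_succ_self a) ha) x,
      Finset.sum_range_succ, add_mul]

lemma rad_pow_m (k : ℕ) (x : Gm m) : rad m k x ^ m k = 1 := by
  rw [rad_eq m hm, ← Complex.exp_nat_mul]
  have hmk : (m k : ℂ) ≠ 0 := by
    have := hm k; exact_mod_cast (by omega : (m k : ℕ) ≠ 0)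
  have h : (m k : ℂ) * (((2 * π * ((x k).val : ℝ) / (m k : ℝ) : ℝ) : ℂ) * Complex.I)
      = (((x k).val : ℤ) : ℂ) * (2 * π * Complex.I) := by
    push_cast
    field_simp
  rw [h, Complex.exp_int_mul_two_pi_mul_I]

lemma rad_ne_one {k : ℕ} (x : Gm m) (h : x k ≠ 0) : rad m k x ≠ 1 := by
  haveI : NeZero (m k) := ⟨by have := hm k; omega⟩
  have hv1 : 1 ≤ (x k).val := by
    rcases Nat.eq_zero_or_pos (x k).val with h0 | h0
    · exact absurd ((ZMod.val_eq_zero _).mp h0) h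
    · exact h0
  have hv2 : (x k).val < m k := ZMod.val_lt _
  rw [rad_eq m hm, Ne, Complex.exp_eq_one_iff]
  rintro ⟨t, ht⟩
  set θ : ℝ := 2 * π * ((x k).val : ℝ) / (m k : ℝ) with hθ
  have hmp : (0:ℝ) < m k := by exact_mod_cast lt_of_lt_of_le two_pos (hm k)
  have hθpos : 0 < θ := by
    apply div_pos _ hmp
    have : (0:ℝ) < ((x k).val : ℝ) := by exact_mod_cast hv1
    positivity
  have hθlt : θ < 2 * π := by
    rw [hθ, div_lt_iff₀ hmp]
    have h1 : ((x k).val : ℝ) < (m k : ℝ) := by exact_mod_cast hv2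
    nlinarith [Real.pi_pos]
  have htr : (θ : ℂ) = (t : ℂ) * (2 * π) := by
    have := ht
    rw [show (t : ℂ) * (2 * ↑π * Complex.I) = ((t : ℂ) * (2 * ↑π)) * Complex.I by ring] at this
    exact mul_right_cancel₀ Complex.I_ne_zero this
  have htr' : θ = (t : ℝ) * (2 * π) := by exact_mod_cast htr
  have hpi : (0:ℝ) < 2 * π := by positivity
  have ht1 : (0:ℝ) < (t:ℝ) := by
    by_contra hc
    push_neg at hc
    nlinarith
  have ht2 : (t:ℝ) < 1 := by
    by_contra hc
    push_neg at hc
    nlinarith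
  have : (0:ℤ) < t := by exact_mod_cast ht1
  have : (t:ℤ) < 1 := by exact_mod_cast ht2
  omega

lemma sum_rad (k : ℕ) (x : Gm m) :
    ∑ r ∈ Finset.range (m k), rad m k x ^ r = if x k = 0 then (m k : ℂ) else 0 := by
  haveI : NeZero (m k) := ⟨by have := hm k; omega⟩
  split_ifs with h
  · have hv : (x k).val = 0 := by rw [h]; exact ZMod.val_zero
    have : rad m k x = 1 := by
      rw [rad_eq m hm, hv]
      simp
    simp [this]
  · rw [geom_sum_eq (rad_ne_one m hm x h), rad_pow_m m hm, sub_self, zero_div]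

lemma DkerM_eq {k : ℕ} (x : Gm m) (h : ∀ j < k, x j = 0) :
    Dker m (Mseq m k) x = (Mseq m k : ℂ) := by
  induction k with
  | zero =>
    show Dker m 1 x = _
    unfold Dker
    rw [Finset.sum_range_one, vil_zero m hm x]
    norm_num [Mseq]
  | succ k ih =>
    show Dker m (m k * Mseq m k) x = _
    rw [Dker_block m hm le_rfl x, sum_rad m hm k x, if_pos (h k (Nat.lt_succ_self k)),
      ih (fun j hj => h j (Nat.lt_succ_of_lt hj))]
    push_cast [Mseq]
    ring

lemma DkerM_zero {k j : ℕ} (x : Gm m) (hj : j < k) (h : x j ≠ 0) :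
    Dker m (Mseq m k) x = 0 := by
  induction k with
  | zero => omega
  | succ k ih =>
    show Dker m (m k * Mseq m k) x = 0
    rw [Dker_block m hm le_rfl x, sum_rad m hm k x]
    rcases Nat.lt_succ_iff_lt_or_eq.mp hj with hjk | rfl
    · rw [ih hjk, mul_zero]
    · rw [if_neg h, zero_mul]

lemma digit_ne_zero_M_le {n j : ℕ} (h : digit m n j ≠ 0) : Mseq m j ≤ n := by
  by_contra hc; push_neg at hc; exact h (digit_eq_zero m hm hc)

lemma S_bddAbove (n : ℕ) : BddAbove {j | digit m n j ≠ 0} :=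
  ⟨n, fun j hj => le_of_lt (lt_of_lt_of_le (lt_M m hm j) (digit_ne_zero_M_le m hm hj))⟩

lemma exists_digit_ge {n k : ℕ} (h : Mseq m k ≤ n) : ∃ j, k ≤ j ∧ digit m n j ≠ 0 := by
  set T := {j | Mseq m j ≤ n} with hT
  have hTne : T.Nonempty := ⟨k, h⟩
  have hTb : BddAbove T := ⟨n, fun j hj => le_trans (le_of_lt (lt_M m hm j)) hj⟩
  have hjT : sSup T ∈ T := Nat.sSup_mem hTne hTb
  set j := sSup T with hj
  have hjn : Mseq m j ≤ n := hjT
  have hj1 : n < Mseq m (j+1) := by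
    by_contra hc; push_neg at hc
    have : j + 1 ≤ j := le_csSup hTb hc
    omega
  refine ⟨j, le_csSup hTb h, ?_⟩
  have h1 : 1 ≤ n / Mseq m j := (Nat.one_le_div_iff (Mpos m hm j)).mpr hjn
  have h2 : n / Mseq m j < m j := by
    rw [Nat.div_lt_iff_lt_mul (Mpos m hm j)]
    exact hj1
  unfold digit
  rw [Nat.mod_eq_of_lt h2]
  omega

lemma M_dvd_of_digits_zero {n k : ℕ} (h : ∀ j < k, digit m n j = 0) : Mseq m k ∣ n := by
  induction k with
  | zero => exact one_dvd n
  | succ k ih =>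
    have hk : Mseq m k ∣ n := ih (fun j hj => h j (Nat.lt_succ_of_lt hj))
    have h0 : n / Mseq m k % m k = 0 := h k (Nat.lt_succ_self k)
    obtain ⟨c, hc⟩ := Nat.dvd_of_mod_eq_zero h0
    refine ⟨c, ?_⟩
    show n = m k * Mseq m k * c
    have h1 : n / Mseq m k * Mseq m k = n := Nat.div_mul_cancel hk
    rw [← h1, hc]; ring

lemma digit_mod {n K j : ℕ} (hj : j < K) : digit m (n % Mseq m K) j = digit m n j := by
  conv_rhs => rw [← Nat.div_add_mod n (Mseq m K)]
  rw [mul_comm (Mseq m K), digit_add m hm (Nat.mod_lt _ (Mpos m hm K)) j, if_pos hj]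

lemma mod_Msucc (n k : ℕ) :
    n % Mseq m (k+1) = digit m n k * Mseq m k + n % Mseq m k := by
  set a := n % Mseq m (k+1) with ha
  have hd : Mseq m k ∣ Mseq m (k+1) := Mdvd m hm (Nat.le_succ k)
  have h1 : a % Mseq m k = n % Mseq m k := Nat.mod_mod_of_dvd n hd
  have halt : a < Mseq m (k+1) := Nat.mod_lt _ (Mpos m hm (k+1))
  have h2 : a / Mseq m k < m k := by
    rw [Nat.div_lt_iff_lt_mul (Mpos m hm k)]
    exact halt
  have h3 : a / Mseq m k = digit m n k := by
    rw [← digit_mod m hm (n := n) (Nat.lt_succ_self k)]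
    unfold digit
    rw [Nat.mod_eq_of_lt h2]
  conv_lhs => rw [← Nat.div_add_mod a (Mseq m k)]
  rw [h1, mul_comm (Mseq m k), h3]

end lems

lemma abs_exp_theta_sub_one (θ : ℝ) :
    ‖Complex.exp ((θ:ℂ) * Complex.I) - 1‖ = 2 * |Real.sin (θ/2)| := by
  rw [Complex.norm_def, Complex.normSq_apply]
  simp only [Complex.sub_re, Complex.sub_im, Complex.one_re, Complex.one_im,
    Complex.exp_ofReal_mul_I_re, Complex.exp_ofReal_mul_I_im, sub_zero]
  have h2 : (2:ℝ) * Real.sqrt ((1 - Real.cos θ)/2) = Real.sqrt (4 * ((1 - Real.cos θ)/2)) := by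
    rw [show (4:ℝ) = 2^2 by norm_num, Real.sqrt_mul (by positivity), Real.sqrt_sq (by norm_num)]
  rw [Real.abs_sin_half, h2]
  congr 1
  linear_combination Real.sin_sq_add_cos_sq θ

lemma sin_ineq {N d : ℕ} (hN : 2 ≤ N) (h1 : 1 ≤ d) (h2 : d < N) :
    Real.sin (π / N) ≤ Real.sin (π * d / N) := by
  have hNp : (0:ℝ) < N := by exact_mod_cast (by omega : 0 < N)
  have key : ∀ c : ℕ, 1 ≤ c → 2*c ≤ N → Real.sin (π / N) ≤ Real.sin (π * c / N) := by
    intro c hc1 hc2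
    apply Real.sin_le_sin_of_le_of_le_pi_div_two
    · have h : 0 < π / N := by positivity
      nlinarith [Real.pi_pos]
    · rw [div_le_div_iff₀ hNp (by norm_num : (0:ℝ) < 2)]
      have hcc : (2*c : ℝ) ≤ N := by exact_mod_cast hc2
      nlinarith [Real.pi_pos]
    · have hcc : (1:ℝ) ≤ (c:ℝ) := by exact_mod_cast hc1
      rw [div_le_div_iff_of_pos_right hNp]
      nlinarith [Real.pi_pos]
  rcases le_or_gt (2*d) N with hcase | hcase
  · exact key d h1 hcase
  · have hdN : d ≤ N := le_of_lt h2
    have h1' : 1 ≤ N - d := by omega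
    have h2' : 2*(N-d) ≤ N := by omega
    have hthis := key (N-d) h1' h2'
    rw [show ((N - d : ℕ) : ℝ) = (N:ℝ) - d from by push_cast [hdN]; ring] at hthis
    rw [show π * ((N:ℝ) - d) / N = π - π * d / N from by field_simp,
      Real.sin_pi_sub] at hthis
    exact hthis

/-- For `|n| ≠ ⟨n⟩` and `x ∈ I_{⟨n⟩+1}(e_{⟨n⟩})` one has
`|D_n(x)| = |D_{n - M_{|n|}}(x)| ≥ M_{⟨n⟩}`. -/
theorem stmt_10 (m : ℕ → ℕ) (hm : ∀ k, 2 ≤ m k) (n : ℕ) (hne : hi m n ≠ lo m n)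
    (x : Gm m) (hx1 : ∀ j < lo m n, x j = 0) (hx2 : x (lo m n) = 1) :
    ‖Dker m n x‖ = ‖Dker m (n - Mseq m (hi m n)) x‖ ∧
      (Mseq m (lo m n) : ℝ) ≤ ‖Dker m n x‖ := by
  classical
  have hn0 : n ≠ 0 := by
    rintro rfl
    apply hne
    have he : {j | digit m 0 j ≠ 0} = ∅ := by
      ext j; simp [digit_zero m hm j]
    unfold hi lo
    rw [he]
    simp
  set L := lo m n with hL
  set H := hi m n with hH
  haveI : Fact (1 < m L) := ⟨hm L⟩
  have hSne : {j | digit m n j ≠ 0}.Nonempty := by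
    obtain ⟨j, _, hj⟩ := exists_digit_ge m hm (n := n) (k := 0)
      (by show Mseq m 0 ≤ n; show 1 ≤ n; omega)
    exact ⟨j, hj⟩
  have hSb := S_bddAbove m hm n
  have hHd : digit m n H ≠ 0 := Nat.sSup_mem hSne hSb
  have hLd : digit m n L ≠ 0 := Nat.sInf_mem hSne
  have hLH : L ≤ H := le_csSup hSb (Nat.sInf_mem hSne)
  have hLH' : L < H := lt_of_le_of_ne hLH (Ne.symm hne)
  have htop : n < Mseq m (H+1) := by
    by_contra hc; push_neg at hc
    obtain ⟨j, hj1, hj2⟩ := exists_digit_ge m hm hc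
    have : j ≤ H := le_csSup hSb hj2
    omega
  have hlow : ∀ j < L, digit m n j = 0 := by
    intro j hj
    by_contra hc
    have h6 := Nat.sInf_le (show j ∈ {j | digit m n j ≠ 0} from hc)
    have h7 : sInf {j | digit m n j ≠ 0} = L := rfl
    omega
  have hxL : x L ≠ 0 := by rw [hx2]; exact one_ne_zero
  have hDM0 : ∀ k, L < k → Dker m (Mseq m k) x = 0 := fun k hk => DkerM_zero m hm x hk hxL
  have habs_step : ∀ k r q, L < k → r ≤ m k → q ≤ Mseq m k →
      ‖Dker m (r * Mseq m k + q) x‖ = ‖Dker m q x‖ := by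
    intro k r q hk hr hq
    rw [Dker_split m hm r hq x, Dker_block m hm hr x, hDM0 k hk, mul_zero, zero_add,
      norm_mul, abs_vil m hm, one_mul]
  have hred : ∀ t, ‖Dker m (n % Mseq m (L+1+t)) x‖
      = ‖Dker m (n % Mseq m (L+1)) x‖ := by
    intro t
    induction t with
    | zero => rfl
    | succ t ih =>
      rw [show L+1+(t+1) = (L+1+t)+1 from rfl, mod_Msucc m hm n (L+1+t),
        habs_step (L+1+t) _ _ (by omega) (le_of_lt (digit_lt m hm n _))
          (le_of_lt (Nat.mod_lt _ (Mpos m hm _)))]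
      exact ih
  have hq : n % Mseq m H < Mseq m H := Nat.mod_lt n (Mpos m hm H)
  have hdH : n / Mseq m H = digit m n H := by
    unfold digit
    rw [Nat.mod_eq_of_lt]
    rw [Nat.div_lt_iff_lt_mul (Mpos m hm H)]
    exact htop
  have hn_eq : digit m n H * Mseq m H + n % Mseq m H = n := by
    rw [← hdH, mul_comm]
    exact Nat.div_add_mod n (Mseq m H)
  have habsn : ‖Dker m n x‖ = ‖Dker m (n % Mseq m H) x‖ := by
    conv_lhs => rw [← hn_eq]
    exact habs_step H _ _ hLH' (le_of_lt (digit_lt m hm n H)) (le_of_lt hq)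
  obtain ⟨e, he⟩ : ∃ e, digit m n H = e + 1 := ⟨digit m n H - 1, by omega⟩
  have hsub : n - Mseq m H = e * Mseq m H + n % Mseq m H := by
    have h4 := hn_eq
    rw [he] at h4
    have h5 : (e+1) * Mseq m H = e * Mseq m H + Mseq m H := by ring
    omega
  have part1 : ‖Dker m n x‖ = ‖Dker m (n - Mseq m H) x‖ := by
    rw [habsn, hsub, habs_step H e _ hLH'
      (by have := digit_lt m hm n H; omega) (le_of_lt hq)]
  refine ⟨part1, ?_⟩
  have hmodH : n % Mseq m (H+1) = n := Nat.mod_eq_of_lt htop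
  have hchain : ‖Dker m n x‖ = ‖Dker m (n % Mseq m (L+1)) x‖ := by
    have hredH := hred (H - L)
    rw [show L + 1 + (H - L) = H + 1 from by omega, hmodH] at hredH
    exact hredH
  have hML0 : n % Mseq m L = 0 := by
    obtain ⟨c, hc⟩ := M_dvd_of_digits_zero m hm hlow
    rw [hc]
    exact Nat.mul_mod_right _ _
  have hmodL1 : n % Mseq m (L+1) = digit m n L * Mseq m L := by
    rw [mod_Msucc m hm n L, hML0, add_zero]
  set d := digit m n L with hd
  have hd1 : 1 ≤ d := Nat.one_le_iff_ne_zero.mpr hLd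
  have hd2 : d < m L := digit_lt m hm n L
  have hDd : Dker m (d * Mseq m L) x
      = (∑ r ∈ Finset.range d, rad m L x ^ r) * (Mseq m L : ℂ) := by
    rw [Dker_block m hm (le_of_lt hd2) x, DkerM_eq m hm x hx1]
  -- geometric sum estimate
  have hval : (x L).val = 1 := by rw [hx2]; exact ZMod.val_one _
  have hmLpos : (0:ℝ) < (m L : ℝ) := by exact_mod_cast (by have := hm L; omega : 0 < m L)
  set θ0 : ℝ := 2 * π / (m L) with hθ0
  have hθeq : (2 * π * ((x L).val : ℝ) / (m L : ℝ) : ℝ) = θ0 := by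
    rw [hval, hθ0]; push_cast; ring
  have hω : rad m L x = Complex.exp ((θ0:ℂ) * Complex.I) := by
    rw [rad_eq m hm, hθeq]
  have hωd : rad m L x ^ d = Complex.exp (((d * θ0 : ℝ):ℂ) * Complex.I) := by
    rw [hω, ← Complex.exp_nat_mul]
    congr 1
    push_cast
    ring
  have hsinpos : 0 < Real.sin (π / m L) := by
    apply Real.sin_pos_of_pos_of_lt_pi
    · positivity
    · rw [div_lt_iff₀ hmLpos]
      nlinarith [Real.pi_pos,
        mul_le_mul_of_nonneg_left (by exact_mod_cast hm L : (2:ℝ) ≤ (m L:ℝ)) Real.pi_pos.le]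
  have hsin_d_nonneg : 0 ≤ Real.sin (π * d / m L) := by
    apply Real.sin_nonneg_of_nonneg_of_le_pi
    · positivity
    · rw [div_le_iff₀ hmLpos]
      have : (d : ℝ) ≤ (m L : ℝ) := by exact_mod_cast le_of_lt hd2
      nlinarith [Real.pi_pos]
  have habs_den : ‖rad m L x - 1‖ = 2 * Real.sin (π / m L) := by
    rw [hω, abs_exp_theta_sub_one, show θ0 / 2 = π / m L from by rw [hθ0]; ring,
      abs_of_pos hsinpos]
  have habs_num : ‖rad m L x ^ d - 1‖ = 2 * |Real.sin (π * d / m L)| := by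
    rw [hωd, abs_exp_theta_sub_one, show (d * θ0) / 2 = π * d / m L from by rw [hθ0]; ring]
  have hgeom : 1 ≤ ‖∑ r ∈ Finset.range d, rad m L x ^ r‖ := by
    rw [geom_sum_eq (rad_ne_one m hm x hxL), norm_div, habs_num, habs_den]
    rw [le_div_iff₀ (by positivity), one_mul]
    have := sin_ineq (hm L) hd1 hd2
    rw [_root_.abs_of_nonneg hsin_d_nonneg]
    linarith
  rw [hchain, hmodL1, hDd, norm_mul, Complex.norm_natCast]
  calc (Mseq m L : ℝ) = 1 * (Mseq m L : ℝ) := (one_mul _).symm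
    _ ≤ _ := mul_le_mul_of_nonneg_right hgeom (by positivity)
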